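/- Let r₋ < r₊ be real numbers, let w, ρ : (r₋, r₊) → ℝ be continuous and everywhere positive, and let Ṽ : (r₋, r₊) → ℝ be continuous with Ṽ ≥ 0. Let σ ∈ ℂ with Im σ > 0. Suppose Ψ : (r₋, r₊) → ℂ is continuously differentiable, w·Ψ′ is differentiable, and (wΨ′)′(r) = ρ(r)(Ṽ(r) − σ²)Ψ(r) for all r ∈ (r₋, r₊). Assume moreover that the functions w|Ψ′|², ρ|Ψ|² and ρṼ|Ψ|² are integrable on (r₋, r₊), and that w(r)Ψ′(r)·conj(Ψ(r)) → 0 as r → r₋⁺ and as r → r₊⁻. Then Ψ is identically zero. -/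

import Mathlib

open MeasureTheory

/-- Sturm–Liouville non-existence of modes with `Im σ > 0`: if `Ψ` is `C¹` on `(r₋, r₊)`
and `(wΨ′)′ = ρ(Ṽ − σ²)Ψ` there, with `w, ρ` continuous positive, `Ṽ` continuous
non-negative, the energy integrands integrable, and the boundary pairing
`w Ψ′ conj(Ψ)` tending to `0` at both endpoints, then `Ψ ≡ 0`. -/
theorem sturm_liouville_upper_half_plane (rm rp : ℝ) (hlt : rm < rp)
    (w ρ Vt : ℝ → ℝ)
    (hw : ContinuousOn w (Set.Ioo rm rp)) (hρ : ContinuousOn ρ (Set.Ioo rm rp))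
    (hVt : ContinuousOn Vt (Set.Ioo rm rp))
    (hwpos : ∀ r ∈ Set.Ioo rm rp, 0 < w r)
    (hρpos : ∀ r ∈ Set.Ioo rm rp, 0 < ρ r)
    (hVtnn : ∀ r ∈ Set.Ioo rm rp, 0 ≤ Vt r)
    (σ : ℂ) (hσ : 0 < σ.im)
    (Ψ Ψd : ℝ → ℂ)
    (hΨ : ∀ r ∈ Set.Ioo rm rp, HasDerivAt Ψ (Ψd r) r)
    (hΨd : ContinuousOn Ψd (Set.Ioo rm rp))
    (hode : ∀ r ∈ Set.Ioo rm rp,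
      HasDerivAt (fun s => (w s : ℂ) * Ψd s)
        ((ρ r : ℂ) * ((Vt r : ℂ) - σ ^ 2) * Ψ r) r)
    (hint1 : IntegrableOn (fun r => w r * ‖Ψd r‖ ^ 2) (Set.Ioo rm rp))
    (hint2 : IntegrableOn (fun r => ρ r * ‖Ψ r‖ ^ 2) (Set.Ioo rm rp))
    (hint3 : IntegrableOn (fun r => ρ r * Vt r * ‖Ψ r‖ ^ 2) (Set.Ioo rm rp))
    (hbdry1 : Filter.Tendsto (fun r => (w r : ℂ) * Ψd r * (starRingEnd ℂ) (Ψ r))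
      (nhdsWithin rm (Set.Ioi rm)) (nhds 0))
    (hbdry2 : Filter.Tendsto (fun r => (w r : ℂ) * Ψd r * (starRingEnd ℂ) (Ψ r))
      (nhdsWithin rp (Set.Iio rp)) (nhds 0)) :
    ∀ r ∈ Set.Ioo rm rp, Ψ r = 0 := by
  have mul_star : ∀ z : ℂ, z * star z = ((‖z‖ ^ 2 : ℝ) : ℂ) := by
    intro z
    rw [show star z = (starRingEnd ℂ) z from rfl, Complex.mul_conj,
      Complex.normSq_eq_norm_sq]
  set I := Set.Ioo rm rp with hI
  set G : ℝ → ℂ := fun x => ((ρ x * Vt x * ‖Ψ x‖ ^ 2 : ℝ) : ℂ)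
      + ((w x * ‖Ψd x‖ ^ 2 : ℝ) : ℂ) - σ ^ 2 * ((ρ x * ‖Ψ x‖ ^ 2 : ℝ) : ℂ) with hG
  have hFderiv : ∀ x ∈ I, HasDerivAt
      (fun s => (w s : ℂ) * Ψd s * (starRingEnd ℂ) (Ψ s)) (G x) x := by
    intro x hx
    have h := (hode x hx).mul ((hΨ x hx).star)
    convert h using 1
    case e'_4 => rfl
    case e'_8 => rfl
    rw [hG]
    simp only [mul_assoc, mul_star (Ψ x), mul_star (Ψd x)]
    push_cast
    ring
  -- integrability pieces
  have h13 : IntegrableOn (fun x => ((ρ x * Vt x * ‖Ψ x‖ ^ 2 : ℝ) : ℂ)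
      + ((w x * ‖Ψd x‖ ^ 2 : ℝ) : ℂ)) I := by
    exact hint3.ofReal.add hint1.ofReal
  have h2c : IntegrableOn (fun x => σ ^ 2 * ((ρ x * ‖Ψ x‖ ^ 2 : ℝ) : ℂ)) I := by
    exact hint2.ofReal.const_mul (σ ^ 2)
  have hGint : IntegrableOn G I := h13.sub h2c
  have hGii : IntervalIntegrable G MeasureTheory.volume rm rp := by
    rw [intervalIntegrable_iff_integrableOn_Ioo_of_le hlt.le]
    exact hGint
  have hFTC := intervalIntegral.integral_eq_sub_of_hasDerivAt_of_tendsto hlt hFderiv hGii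
      hbdry1 hbdry2
  rw [sub_zero] at hFTC
  have hIoo : ∫ x in I, G x = 0 := by
    rw [← MeasureTheory.integral_Ioc_eq_integral_Ioo, ← intervalIntegral.integral_of_le hlt.le]
    exact hFTC
  set A1 := ∫ x in I, ρ x * Vt x * ‖Ψ x‖ ^ 2 with hA1
  set A2 := ∫ x in I, w x * ‖Ψd x‖ ^ 2 with hA2
  set B := ∫ x in I, ρ x * ‖Ψ x‖ ^ 2 with hB
  have hsplit : ((A1 : ℂ) + (A2 : ℂ)) - σ ^ 2 * (B : ℂ) = 0 := by
    have e1 : ∫ x in I, G x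
        = (∫ x in I, (((ρ x * Vt x * ‖Ψ x‖ ^ 2 : ℝ) : ℂ) + ((w x * ‖Ψd x‖ ^ 2 : ℝ) : ℂ)))
          - ∫ x in I, σ ^ 2 * ((ρ x * ‖Ψ x‖ ^ 2 : ℝ) : ℂ) :=
      MeasureTheory.integral_sub h13 h2c
    have e2 : (∫ x in I, (((ρ x * Vt x * ‖Ψ x‖ ^ 2 : ℝ) : ℂ) + ((w x * ‖Ψd x‖ ^ 2 : ℝ) : ℂ)))
        = (∫ x in I, ((ρ x * Vt x * ‖Ψ x‖ ^ 2 : ℝ) : ℂ))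
          + ∫ x in I, ((w x * ‖Ψd x‖ ^ 2 : ℝ) : ℂ) :=
      MeasureTheory.integral_add hint3.ofReal hint1.ofReal
    have e3 : (∫ x in I, σ ^ 2 * ((ρ x * ‖Ψ x‖ ^ 2 : ℝ) : ℂ))
        = σ ^ 2 * ∫ x in I, ((ρ x * ‖Ψ x‖ ^ 2 : ℝ) : ℂ) :=
      MeasureTheory.integral_const_mul _ _
    have e4 : ∀ (f : ℝ → ℝ), IntegrableOn f I →
        (∫ x in I, ((f x : ℝ) : ℂ)) = (((∫ x in I, f x) : ℝ) : ℂ) := by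
      intro f hf
      simpa using ContinuousLinearMap.integral_comp_comm Complex.ofRealCLM hf
    rw [e1, e2, e3, e4 _ hint3, e4 _ hint1, e4 _ hint2] at hIoo
    exact hIoo
  have hA1nn : 0 ≤ A1 := MeasureTheory.setIntegral_nonneg measurableSet_Ioo fun x hx =>
    mul_nonneg (mul_nonneg (hρpos x hx).le (hVtnn x hx)) (sq_nonneg _)
  have hA2nn : 0 ≤ A2 := MeasureTheory.setIntegral_nonneg measurableSet_Ioo fun x hx =>
    mul_nonneg (hwpos x hx).le (sq_nonneg _)
  have hBnn : 0 ≤ B := MeasureTheory.setIntegral_nonneg measurableSet_Ioo fun x hx =>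
    mul_nonneg (hρpos x hx).le (sq_nonneg _)
  have him : σ.re * σ.im * B = 0 := by
    have h := congrArg Complex.im hsplit
    simp only [Complex.add_im, Complex.sub_im, Complex.mul_im, Complex.ofReal_im,
      Complex.ofReal_re, Complex.zero_im, pow_two, Complex.mul_re, mul_zero, zero_mul,
      add_zero, zero_add, sub_zero] at h
    nlinarith [h]
  have hre : A1 + A2 = (σ.re * σ.re - σ.im * σ.im) * B := by
    have h := congrArg Complex.re hsplit
    simp only [Complex.add_re, Complex.sub_re, Complex.mul_im, Complex.ofReal_im,
      Complex.ofReal_re, Complex.zero_re, pow_two, Complex.mul_re, mul_zero, zero_mul,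
      add_zero, zero_add, sub_zero] at h
    nlinarith [h]
  have hB0 : B = 0 := by
    by_contra hB0
    have hBpos : 0 < B := lt_of_le_of_ne hBnn (Ne.symm hB0)
    have hre0 : σ.re = 0 := by
      rcases mul_eq_zero.1 him with h | h
      · rcases mul_eq_zero.1 h with h' | h'
        · exact h'
        · exact absurd h' hσ.ne'
      · exact absurd h hB0
    rw [hre0] at hre
    nlinarith [hre, hA1nn, hA2nn, mul_pos (mul_pos hσ hσ) hBpos]
  have hae : (fun x => ρ x * ‖Ψ x‖ ^ 2) =ᵐ[MeasureTheory.volume.restrict I]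
      (0 : ℝ → ℝ) := by
    rw [← MeasureTheory.integral_eq_zero_iff_of_nonneg_ae _ hint2]
    · exact hB0
    · filter_upwards [MeasureTheory.ae_restrict_mem measurableSet_Ioo] with x hx
      exact mul_nonneg (hρpos x hx).le (sq_nonneg _)
  have hcontΨ : ContinuousOn Ψ I := fun x hx => (hΨ x hx).continuousAt.continuousWithinAt
  have heq : Set.EqOn (fun x => ρ x * ‖Ψ x‖ ^ 2) 0 I :=
    MeasureTheory.Measure.eqOn_open_of_ae_eq hae isOpen_Ioo
      (hρ.mul ((hcontΨ.norm).pow 2)) continuousOn_const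
  intro r hr
  have h0 := heq hr
  simp only [Pi.zero_apply] at h0
  have h2 : ‖Ψ r‖ ^ 2 = 0 := by
    rcases mul_eq_zero.1 h0 with h | h
    · exact absurd h (hρpos r hr).ne'
    · exact h
  have h3 : ‖Ψ r‖ = 0 := by
    nlinarith [norm_nonneg (Ψ r), h2]
  exact norm_eq_zero.1 h3
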